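/- arXiv:1210.5625 — 4 statements merged into one kernel-verified Lean document; each statement's English description precedes it below -/
import Mathlib

section
/- If A is a fixed point of a quantum channel M on a finite-dimensional Hilbert space, and A = (X₊ - X₋) + i(Y₊ - Y₋) where X₊, X₋, Y₊, Y₋ are positive operators with X₊X₋ = X₋X₊ = Y₊Y₋ = Y₋Y₊ = 0, then each of X₊, X₋, Y₊, Y₋ is also a fixed point of M. -/
open Matrix
open scoped ComplexOrder

noncomputable section

abbrev Mat (d : ℕ) := Matrix (Fin d) (Fin d) ℂ

/-- `K` is a Kraus representation of the linear map `Φ`. -/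
def IsKrausRep {d : ℕ} (Φ : Mat d →ₗ[ℂ] Mat d) {n : ℕ} (K : Fin n → Mat d) : Prop :=
  (∀ A, Φ A = ∑ i, K i * A * (K i)ᴴ) ∧ ∑ i, (K i)ᴴ * K i = 1

/-- A quantum channel: completely positive trace-preserving map, i.e. admitting a Kraus
representation with the normalization condition. -/
def IsCPTP {d : ℕ} (Φ : Mat d →ₗ[ℂ] Mat d) : Prop :=
  ∃ (n : ℕ) (K : Fin n → Mat d), IsKrausRep Φ K

/-- A density matrix: positive semidefinite with unit trace. -/
def IsDensity {d : ℕ} (ρ : Mat d) : Prop := ρ.PosSemidef ∧ ρ.trace = 1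

/-- Ergodicity: the channel has a unique fixed point density matrix. -/
def IsErgodic {d : ℕ} (Φ : Mat d →ₗ[ℂ] Mat d) : Prop :=
  ∃! ρ : Mat d, IsDensity ρ ∧ Φ ρ = ρ

/-- The support of an operator, viewed as a subspace of `ℂ^d`. -/
def supp {d : ℕ} (ρ : Mat d) : Submodule ℂ (Fin d → ℂ) := LinearMap.range ρ.mulVecLin

/-- The trace norm `‖A‖₁ = Tr √(A†A)`. -/
def traceNorm {d : ℕ} (A : Mat d) : ℝ :=
  (((Matrix.posSemidef_conjTranspose_mul_self A).1.eigenvectorUnitary.1 *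
      diagonal (((↑) : ℝ → ℂ) ∘ (√·) ∘ (Matrix.posSemidef_conjTranspose_mul_self A).1.eigenvalues) *
      (star (Matrix.posSemidef_conjTranspose_mul_self A).1.eigenvectorUnitary : Mat d)).trace).re

/-- Mixing: iterates of the channel converge in trace norm to a unique state. -/
def IsMixing {d : ℕ} (Φ : Mat d →ₗ[ℂ] Mat d) : Prop :=
  ∃ ρs : Mat d, IsDensity ρs ∧ ∀ ρ : Mat d, IsDensity ρ →
    Filter.Tendsto (fun k : ℕ => traceNorm ((Φ ^ k) ρ - ρs)) Filter.atTop (nhds 0)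

/-- A subspace `S` is invariant for a channel if every Kraus operator (of any Kraus
representation) maps `S` into itself. -/
def IsInvariantSubspace {d : ℕ} (Φ : Mat d →ₗ[ℂ] Mat d) (S : Submodule ℂ (Fin d → ℂ)) : Prop :=
  ∀ (n : ℕ) (K : Fin n → Mat d), IsKrausRep Φ K → ∀ i, ∀ x ∈ S, (K i).mulVec x ∈ S

namespace QCAux

variable {d : ℕ}

lemma psd_add {A B : Mat d} (hA : A.PosSemidef) (hB : B.PosSemidef) : (A + B).PosSemidef :=
  hA.add hB

lemma phi_conjT {Φ : Mat d →ₗ[ℂ] Mat d} (hΦ : IsCPTP Φ) (A : Mat d) :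
    Φ Aᴴ = (Φ A)ᴴ := by
  obtain ⟨n, K, hK, -⟩ := hΦ
  rw [hK, hK, conjTranspose_sum]
  refine Finset.sum_congr rfl fun i _ => ?_
  simp [conjTranspose_mul, Matrix.mul_assoc]

lemma phi_psd {Φ : Mat d →ₗ[ℂ] Mat d} (hΦ : IsCPTP Φ) {A : Mat d} (hA : A.PosSemidef) :
    (Φ A).PosSemidef := by
  obtain ⟨n, K, hK, -⟩ := hΦ
  rw [hK]
  refine Finset.sum_induction _ _ (fun a b ha hb => psd_add ha hb) Matrix.PosSemidef.zero ?_
  exact fun i _ => hA.mul_mul_conjTranspose_same (K i)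

lemma phi_trace {Φ : Mat d →ₗ[ℂ] Mat d} (hΦ : IsCPTP Φ) (A : Mat d) :
    (Φ A).trace = A.trace := by
  obtain ⟨n, K, hK, hN⟩ := hΦ
  rw [hK, trace_sum]
  have h : ∀ i : Fin n, (K i * A * (K i)ᴴ).trace = ((K i)ᴴ * K i * A).trace := by
    intro i
    rw [trace_mul_cycle, Matrix.mul_assoc]
  simp_rw [h]
  rw [← trace_sum, ← Finset.sum_mul, hN, Matrix.one_mul]

lemma trace_nonneg_of_psd {B : Mat d} (hB : B.PosSemidef) : 0 ≤ B.trace := by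
  rw [Matrix.trace]
  refine Finset.sum_nonneg fun i _ => ?_
  exact hB.diag_nonneg

lemma eq_zero_of_trace_conjT_mul_self {A : Mat d} (h : (Aᴴ * A).trace = 0) : A = 0 := by
  have hd : ∀ j, (Aᴴ * A) j j = dotProduct (star (fun i => A i j)) (fun i => A i j) := by
    intro j
    simp [Matrix.mul_apply, Matrix.conjTranspose_apply, dotProduct]
  have h0 : ∀ j ∈ Finset.univ, (Aᴴ * A).diag j = 0 := by
    refine (Finset.sum_eq_zero_iff_of_nonneg ?_).mp h
    intro j _
    rw [Matrix.diag_apply, hd]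
    exact dotProduct_star_self_nonneg _
  ext i j
  have hj := h0 j (Finset.mem_univ j)
  rw [Matrix.diag_apply, hd] at hj
  have hz := dotProduct_star_self_eq_zero.mp hj
  exact congrFun hz i

/-- The orthogonal projection onto the support of `Xp`, as a matrix. -/
lemma exists_proj {Xp Xm : Mat d} (hXp : Xp.PosSemidef) (h1 : Xp * Xm = 0) :
    ∃ P : Mat d, Pᴴ = P ∧ P * P = P ∧ P * Xp = Xp ∧ P * Xm = 0 := by
  have hH := hXp.1
  set U : Mat d := (Matrix.IsHermitian.eigenvectorUnitary hH : Mat d) with hUdef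
  have hU1 : star U * U = 1 :=
    Matrix.mem_unitaryGroup_iff'.mp (Matrix.IsHermitian.eigenvectorUnitary hH).2
  set D : Mat d := Matrix.diagonal (RCLike.ofReal ∘ hH.eigenvalues) with hDdef
  set D' : Mat d := Matrix.diagonal (fun i => if hH.eigenvalues i = 0 then (0 : ℂ) else 1)
    with hD'def
  have hspec : Xp = U * D * star U := hH.spectral_theorem
  refine ⟨U * D' * star U, ?_, ?_, ?_, ?_⟩
  · -- Hermitian
    have hDh : D'ᴴ = D' := by
      rw [hD'def, Matrix.diagonal_conjTranspose]
      refine congrArg Matrix.diagonal (funext fun i => ?_)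
      by_cases h : hH.eigenvalues i = 0 <;> simp [h, Pi.star_apply]
    calc (U * D' * star U)ᴴ = (star U)ᴴ * D'ᴴ * Uᴴ := by
          rw [conjTranspose_mul, conjTranspose_mul, Matrix.mul_assoc]
      _ = U * D' * star U := by
          rw [hDh, star_eq_conjTranspose, conjTranspose_conjTranspose]
  · -- idempotent
    have hDD : D' * D' = D' := by
      rw [hD'def, Matrix.diagonal_mul_diagonal]
      refine congrArg Matrix.diagonal (funext fun i => ?_)
      by_cases h : hH.eigenvalues i = 0 <;> simp [h]
    calc U * D' * star U * (U * D' * star U)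
        = U * (D' * ((star U * U) * (D' * star U))) := by simp only [Matrix.mul_assoc]
      _ = U * (D' * D') * star U := by rw [hU1, Matrix.one_mul]; simp only [Matrix.mul_assoc]
      _ = U * D' * star U := by rw [hDD]
  · -- P * Xp = Xp
    have hDD : D' * D = D := by
      rw [hD'def, hDdef, Matrix.diagonal_mul_diagonal]
      refine congrArg Matrix.diagonal (funext fun i => ?_)
      by_cases h : hH.eigenvalues i = 0 <;> simp [h]
    calc U * D' * star U * Xp = U * D' * star U * (U * D * star U) := by rw [← hspec]
      _ = U * (D' * ((star U * U) * (D * star U))) := by simp only [Matrix.mul_assoc]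
      _ = U * (D' * D) * star U := by rw [hU1, Matrix.one_mul]; simp only [Matrix.mul_assoc]
      _ = Xp := by rw [hDD, hspec]
  · -- P * Xm = 0
    have hDM : D * (star U * Xm) = 0 := by
      have hU0 : U * (D * (star U * Xm)) = 0 := by
        calc U * (D * (star U * Xm)) = (U * D * star U) * Xm := by simp only [Matrix.mul_assoc]
          _ = Xp * Xm := by rw [← hspec]
          _ = 0 := h1
      calc D * (star U * Xm) = (star U * U) * (D * (star U * Xm)) := by
            rw [hU1, Matrix.one_mul]
        _ = star U * (U * (D * (star U * Xm))) := by simp only [Matrix.mul_assoc]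
        _ = 0 := by rw [hU0, Matrix.mul_zero]
    have hDM' : D' * (star U * Xm) = 0 := by
      ext i j
      have hij := congrFun (congrFun hDM i) j
      rw [hDdef, Matrix.diagonal_mul] at hij
      rw [hD'def, Matrix.diagonal_mul]
      simp only [Matrix.zero_apply] at hij ⊢
      by_cases h : hH.eigenvalues i = 0
      · simp [h]
      · have hne : (RCLike.ofReal (hH.eigenvalues i) : ℂ) ≠ 0 := by simpa using h
        simp only [Function.comp_apply] at hij
        have hz := (mul_eq_zero.mp hij).resolve_left hne
        simp [h, hz]
    calc U * D' * star U * Xm = U * (D' * (star U * Xm)) := by simp only [Matrix.mul_assoc]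
      _ = 0 := by rw [hDM', Matrix.mul_zero]

open scoped MatrixOrder in
lemma psd_sandwich_zero {C P : Mat d} (hC : C.PosSemidef) (hPh : Pᴴ = P)
    (h : (P * C * P).trace = 0) : C * P = 0 := by
  have hs : (CFC.sqrt C).IsHermitian := (CFC.sqrt_nonneg C).posSemidef.1
  have hrep : P * C * P = (CFC.sqrt C * P)ᴴ * (CFC.sqrt C * P) := by
    rw [conjTranspose_mul, hPh, hs.eq]
    calc P * C * P = P * (CFC.sqrt C * CFC.sqrt C) * P := by rw [CFC.sqrt_mul_sqrt_self C hC.nonneg]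
      _ = P * CFC.sqrt C * (CFC.sqrt C * P) := by simp only [Matrix.mul_assoc]
  rw [hrep] at h
  have h0 : CFC.sqrt C * P = 0 := eq_zero_of_trace_conjT_mul_self h
  calc C * P = CFC.sqrt C * (CFC.sqrt C * P) := by rw [← Matrix.mul_assoc, CFC.sqrt_mul_sqrt_self C hC.nonneg]
    _ = 0 := by rw [h0, Matrix.mul_zero]

lemma jordan_fixed {Φ : Mat d →ₗ[ℂ] Mat d} (hΦ : IsCPTP Φ)
    {Xp Xm : Mat d} (hXp : Xp.PosSemidef) (hXm : Xm.PosSemidef)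
    (h1 : Xp * Xm = 0) (hfix : Φ (Xp - Xm) = Xp - Xm) : Φ Xp = Xp := by
  obtain ⟨P, hPh, hPP, hPXp, hPXm⟩ := exists_proj hXp h1
  have hXpP : Xp * P = Xp := by
    have h := congrArg conjTranspose hPXp
    rwa [conjTranspose_mul, hPh, hXp.1.eq] at h
  have hXmP : Xm * P = 0 := by
    have h := congrArg conjTranspose hPXm
    rwa [conjTranspose_mul, hPh, hXm.1.eq, conjTranspose_zero] at h
  set B := Φ Xp with hBdef
  set C := Φ Xm with hCdef
  have hB : B.PosSemidef := phi_psd hΦ hXp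
  have hC : C.PosSemidef := phi_psd hΦ hXm
  have hBC : B - C = Xp - Xm := by rw [hBdef, hCdef, ← map_sub]; exact hfix
  have hQh : (1 - P)ᴴ = 1 - P := by rw [conjTranspose_sub, hPh, conjTranspose_one]
  have hQQ : (1 - P) * (1 - P) = 1 - P := by
    rw [Matrix.mul_sub, Matrix.sub_mul, Matrix.sub_mul, hPP]
    simp
  have hPCP : (P * C * P).PosSemidef := by
    have h := hC.mul_mul_conjTranspose_same P; rwa [hPh] at h
  have hQBQ : ((1 - P) * B * (1 - P)).PosSemidef := by
    have h := hB.mul_mul_conjTranspose_same (1 - P); rwa [hQh] at h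
  have key : P * B * P - P * C * P = Xp := by
    calc P * B * P - P * C * P = P * (B - C) * P := by
          rw [Matrix.mul_sub, Matrix.sub_mul]
      _ = P * (Xp - Xm) * P := by rw [hBC]
      _ = Xp := by
          rw [Matrix.mul_sub, hPXp, hPXm, Matrix.sub_mul, hXpP, Matrix.zero_mul, sub_zero]
  -- trace bookkeeping
  have htB : B.trace = Xp.trace := phi_trace hΦ Xp
  have htPBP : (P * B * P).trace = (P * B).trace := by
    rw [trace_mul_cycle, hPP]
  have htQBQ : ((1 - P) * B * (1 - P)).trace = ((1 - P) * B).trace := by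
    rw [trace_mul_cycle, hQQ]
  have hsplit : (P * B * P).trace + ((1 - P) * B * (1 - P)).trace = B.trace := by
    rw [htPBP, htQBQ, ← trace_add, ← Matrix.add_mul]
    simp
  have hkey_tr : Xp.trace = (P * B * P).trace - (P * C * P).trace := by
    rw [← key, trace_sub]
  have hab : (P * C * P).trace + ((1 - P) * B * (1 - P)).trace = 0 := by
    linear_combination hsplit + htB + hkey_tr
  have hq0 : 0 ≤ (P * C * P).trace := trace_nonneg_of_psd hPCP
  have hr0 : 0 ≤ ((1 - P) * B * (1 - P)).trace := trace_nonneg_of_psd hQBQ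
  have hq : (P * C * P).trace = 0 := by
    have hle : (P * C * P).trace ≤ (P * C * P).trace + ((1 - P) * B * (1 - P)).trace :=
      le_add_of_nonneg_right hr0
    rw [hab] at hle
    exact le_antisymm hle hq0
  have hr : ((1 - P) * B * (1 - P)).trace = 0 := by linear_combination hab - hq
  have hCP : C * P = 0 := psd_sandwich_zero hC hPh hq
  have hBQ : B * (1 - P) = 0 := psd_sandwich_zero hB hQh hr
  have hBP : B * P = B := by
    rw [Matrix.mul_sub, Matrix.mul_one] at hBQ
    exact (sub_eq_zero.mp hBQ).symm
  have hPB : P * B = B := by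
    have h := congrArg conjTranspose hBP
    rwa [conjTranspose_mul, hPh, hB.1.eq] at h
  calc Φ Xp = B := rfl
    _ = P * B * P - P * C * P := by
        rw [Matrix.mul_assoc P B P, Matrix.mul_assoc P C P, hCP, Matrix.mul_zero, sub_zero, hBP, hPB]
    _ = Xp := key

end QCAux

/-- If `A` is a fixed point of a quantum channel and `A = (X₊ - X₋) + i(Y₊ - Y₋)` with
`X₊, X₋, Y₊, Y₋` positive semidefinite and mutually annihilating pairs, then each of the four
positive parts is also a fixed point. -/
theorem fixed_point_positive_parts {d : ℕ} (Φ : Mat d →ₗ[ℂ] Mat d) (hΦ : IsCPTP Φ)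
    (A Xp Xm Yp Ym : Mat d)
    (hXp : Xp.PosSemidef) (hXm : Xm.PosSemidef) (hYp : Yp.PosSemidef) (hYm : Ym.PosSemidef)
    (hX1 : Xp * Xm = 0) (hX2 : Xm * Xp = 0) (hY1 : Yp * Ym = 0) (hY2 : Ym * Yp = 0)
    (hA : A = (Xp - Xm) + Complex.I • (Yp - Ym))
    (hfix : Φ A = A) :
    Φ Xp = Xp ∧ Φ Xm = Xm ∧ Φ Yp = Yp ∧ Φ Ym = Ym := by
  set X := Xp - Xm with hXdef
  set Y := Yp - Ym with hYdef
  have hXh : Xᴴ = X := by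
    rw [hXdef, conjTranspose_sub, hXp.1.eq, hXm.1.eq]
  have hYh : Yᴴ = Y := by
    rw [hYdef, conjTranspose_sub, hYp.1.eq, hYm.1.eq]
  have hAc : Aᴴ = X - Complex.I • Y := by
    rw [hA, conjTranspose_add, conjTranspose_smul, hXh, hYh]
    rw [Complex.star_def, Complex.conj_I, neg_smul, ← sub_eq_add_neg]
  have h1 : Φ X + Complex.I • Φ Y = X + Complex.I • Y := by
    rw [← Φ.map_smul, ← map_add, ← hA]
    rw [hfix, hA]
  have h2 : Φ X - Complex.I • Φ Y = X - Complex.I • Y := by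
    rw [← Φ.map_smul, ← map_sub, ← hAc, QCAux.phi_conjT hΦ, hfix, hAc]
  have hXfix : Φ X = X := by
    have h3 : (2 : ℂ) • Φ X = (2 : ℂ) • X := by
      calc (2 : ℂ) • Φ X = (Φ X + Complex.I • Φ Y) + (Φ X - Complex.I • Φ Y) := by module
        _ = (X + Complex.I • Y) + (X - Complex.I • Y) := by rw [h1, h2]
        _ = (2 : ℂ) • X := by module
    exact smul_right_injective (Mat d) two_ne_zero h3
  have hYfix : Φ Y = Y := by
    have h3 : ((2 : ℂ) * Complex.I) • Φ Y = ((2 : ℂ) * Complex.I) • Y := by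
      calc ((2 : ℂ) * Complex.I) • Φ Y
          = (Φ X + Complex.I • Φ Y) - (Φ X - Complex.I • Φ Y) := by module
        _ = (X + Complex.I • Y) - (X - Complex.I • Y) := by rw [h1, h2]
        _ = ((2 : ℂ) * Complex.I) • Y := by module
    exact smul_right_injective (Mat d) (by simp [Complex.I_ne_zero]) h3
  have hXpfix : Φ Xp = Xp := QCAux.jordan_fixed hΦ hXp hXm hX1 hXfix
  have hYpfix : Φ Yp = Yp := QCAux.jordan_fixed hΦ hYp hYm hY1 hYfix
  refine ⟨hXpfix, ?_, hYpfix, ?_⟩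
  · have h := map_sub Φ Xp Xm
    rw [← hXdef, hXfix, hXpfix] at h
    calc Φ Xm = Xp - (Xp - Φ Xm) := by abel
      _ = Xp - (Xp - Xm) := by rw [← h, hXdef]
      _ = Xm := by abel
  · have h := map_sub Φ Yp Ym
    rw [← hYdef, hYfix, hYpfix] at h
    calc Φ Ym = Yp - (Yp - Φ Ym) := by abel
      _ = Yp - (Yp - Ym) := by rw [← h, hYdef]
      _ = Ym := by abel
end
end

section
/- If a quantum channel M on a finite-dimensional Hilbert space has two distinct fixed point density matrices, then M has two fixed point density matrices with orthogonal supports. -/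
open Matrix
open scoped ComplexOrder

noncomputable section

section AuxHelpers
variable {d : ℕ}


lemma aux_diag_nonneg {A : Mat d} (hA : A.PosSemidef) (i : Fin d) : 0 ≤ A i i := by
  have h := hA.dotProduct_mulVec_nonneg (Pi.single i 1)
  simpa [dotProduct, Matrix.mulVec, Pi.single_apply, Finset.sum_ite_eq,
    mul_ite, ite_mul, apply_ite star] using h

lemma aux_trace_nonneg {A : Mat d} (hA : A.PosSemidef) : 0 ≤ A.trace :=
  Finset.sum_nonneg fun i _ => aux_diag_nonneg hA i

lemma aux_tr_conj_mul_self {B : Mat d} (h : (Bᴴ * B).trace = 0) : B = 0 := by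
  have hnn : ∀ j ∈ Finset.univ, 0 ≤ (Bᴴ * B) j j := fun j _ =>
    aux_diag_nonneg (Matrix.posSemidef_conjTranspose_mul_self B) j
  have hz := (Finset.sum_eq_zero_iff_of_nonneg hnn).mp h
  ext i j
  have hj : (Bᴴ * B) j j = 0 := hz j (Finset.mem_univ j)
  have hnn2 : ∀ i ∈ Finset.univ, 0 ≤ star (B i j) * B i j := fun i _ =>
    star_mul_self_nonneg _
  have hj' : ∑ i, star (B i j) * B i j = 0 := by
    simpa [Matrix.mul_apply, Matrix.conjTranspose_apply] using hj
  have h0 := (Finset.sum_eq_zero_iff_of_nonneg hnn2).mp hj' i (Finset.mem_univ i)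
  rw [Matrix.zero_apply]
  rcases mul_eq_zero.mp h0 with h' | h'
  · exact star_eq_zero.mp h'
  · exact h'

open scoped MatrixOrder in
lemma aux_psd_trace_zero {A : Mat d} (hA : A.PosSemidef) (h : A.trace = 0) : A = 0 := by
  have hs : (CFC.sqrt A)ᴴ * CFC.sqrt A = A := by
    rw [(CFC.sqrt_nonneg A).posSemidef.isHermitian.eq, CFC.sqrt_mul_sqrt_self A hA.nonneg]
  have h3 : CFC.sqrt A = 0 := aux_tr_conj_mul_self (by rw [hs, h])
  rw [← hs, h3, Matrix.mul_zero]
lemma aux_trace_preserving {Φ : Mat d →ₗ[ℂ] Mat d} (hΦ : IsCPTP Φ) (A : Mat d) :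
    (Φ A).trace = A.trace := by
  obtain ⟨n, K, hK1, hK2⟩ := hΦ
  rw [hK1, Matrix.trace_sum]
  calc ∑ i, (K i * A * (K i)ᴴ).trace
      = ∑ i, ((K i)ᴴ * K i * A).trace := by
        refine Finset.sum_congr rfl fun i _ => ?_
        rw [Matrix.trace_mul_cycle]
    _ = ((∑ i, (K i)ᴴ * K i) * A).trace := by rw [Finset.sum_mul, Matrix.trace_sum]
    _ = A.trace := by rw [hK2, one_mul]

lemma aux_psd_preserving {Φ : Mat d →ₗ[ℂ] Mat d} (hΦ : IsCPTP Φ) {A : Mat d}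
    (hA : A.PosSemidef) : (Φ A).PosSemidef := by
  obtain ⟨n, K, hK1, _⟩ := hΦ
  rw [hK1]
  exact Finset.sum_induction _ _ (fun a b ha hb => ha.add hb) Matrix.PosSemidef.zero
    (fun i _ => hA.mul_mul_conjTranspose_same (K i))

lemma aux_psd_smul {A : Mat d} (hA : A.PosSemidef) {r : ℝ} (hr : 0 ≤ r) :
    ((r : ℂ) • A).PosSemidef := by
  refine .of_dotProduct_mulVec_nonneg ?_ ?_
  · unfold Matrix.IsHermitian
    rw [Matrix.conjTranspose_smul, hA.1.eq]
    congr 1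
    simp
  · intro x
    rw [Matrix.smul_mulVec, dotProduct_smul]
    exact smul_nonneg (by exact_mod_cast hr) (hA.dotProduct_mulVec_nonneg x)

open scoped MatrixOrder in
lemma aux_support {A P : Mat d} (hA : A.PosSemidef) (hPH : Pᴴ = P)
    (h : (1 - P) * A * (1 - P) = 0) : P * A * P = A := by
  have hsH : (CFC.sqrt A)ᴴ = CFC.sqrt A := (CFC.sqrt_nonneg A).posSemidef.isHermitian.eq
  have hsq : A = CFC.sqrt A * CFC.sqrt A := (CFC.sqrt_mul_sqrt_self A hA.nonneg).symm
  have hB : (CFC.sqrt A * (1 - P))ᴴ * (CFC.sqrt A * (1 - P)) = 0 := by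
    rw [Matrix.conjTranspose_mul, hsH]
    have hQH : (1 - P)ᴴ = 1 - P := by
      rw [Matrix.conjTranspose_sub, hPH, Matrix.conjTranspose_one]
    rw [hQH]
    calc (1 - P) * CFC.sqrt A * (CFC.sqrt A * (1 - P))
        = (1 - P) * (CFC.sqrt A * CFC.sqrt A) * (1 - P) := by
          simp only [Matrix.mul_assoc]
      _ = 0 := by rw [← hsq, h]
  have h0 : CFC.sqrt A * (1 - P) = 0 := Matrix.conjTranspose_mul_self_eq_zero.mp hB
  have h1 : CFC.sqrt A * P = CFC.sqrt A := by
    rw [Matrix.mul_sub, Matrix.mul_one, sub_eq_zero] at h0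
    exact h0.symm
  have h2 : P * CFC.sqrt A = CFC.sqrt A := by
    have := congrArg Matrix.conjTranspose h1
    rwa [Matrix.conjTranspose_mul, hPH, hsH] at this
  rw [hsq, ← Matrix.mul_assoc, Matrix.mul_assoc (P * CFC.sqrt A), h2, h1]

lemma aux_trace_PAP {P A : Mat d} (hPP : P * P = P) :
    (P * A * P).trace = (P * A).trace := by
  rw [Matrix.trace_mul_cycle, hPP]

lemma aux_trace_QAQ {P A : Mat d} (hPP : P * P = P) :
    ((1 - P) * A * (1 - P)).trace = A.trace - (P * A * P).trace := by
  have hQQ : (1 - P) * (1 - P) = 1 - P := by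
    rw [Matrix.mul_sub, Matrix.sub_mul, Matrix.sub_mul, hPP]
    simp only [Matrix.one_mul, Matrix.mul_one]
    abel
  rw [Matrix.trace_mul_cycle, hQQ, aux_trace_PAP hPP, Matrix.sub_mul,
    Matrix.one_mul, Matrix.trace_sub]

end AuxHelpers

/-- If a quantum channel has two distinct fixed point density matrices, then it has two fixed
point density matrices with orthogonal supports (i.e. whose product vanishes). -/
theorem exists_orthogonal_fixed_states {d : ℕ} (Φ : Mat d →ₗ[ℂ] Mat d) (hΦ : IsCPTP Φ)
    (ρ₀ ρ₁ : Mat d) (h₀ : IsDensity ρ₀) (h₁ : IsDensity ρ₁)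
    (hf₀ : Φ ρ₀ = ρ₀) (hf₁ : Φ ρ₁ = ρ₁) (hne : ρ₀ ≠ ρ₁) :
    ∃ σ₀ σ₁ : Mat d, IsDensity σ₀ ∧ IsDensity σ₁ ∧ Φ σ₀ = σ₀ ∧ Φ σ₁ = σ₁ ∧ σ₀ * σ₁ = 0 := by
  classical
  set δ : Mat d := ρ₀ - ρ₁ with hδdef
  have hδH : δ.IsHermitian := h₀.1.1.sub h₁.1.1
  have hδne : δ ≠ 0 := sub_ne_zero.mpr hne
  have hδfix : Φ δ = δ := by rw [hδdef, map_sub, hf₀, hf₁]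
  have hδtr : δ.trace = 0 := by rw [hδdef, Matrix.trace_sub, h₀.2, h₁.2, sub_self]
  set U : Mat d := (hδH.eigenvectorUnitary : Mat d) with hU
  have hUU : star U * U = 1 := Matrix.mem_unitaryGroup_iff'.mp hδH.eigenvectorUnitary.2
  set e := hδH.eigenvalues with he
  -- conjugation by U
  set c : Mat d → Mat d := fun A => U * A * star U with hc
  have c_mul : ∀ A B, c A * c B = c (A * B) := by
    intro A B
    show U * A * star U * (U * B * star U) = U * (A * B) * star U
    calc U * A * star U * (U * B * star U) = U * A * (star U * U) * (B * star U) := by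
          simp only [Matrix.mul_assoc]
      _ = U * (A * B) * star U := by rw [hUU]; simp only [Matrix.mul_one, Matrix.mul_assoc]
  have c_sub : ∀ A B, c A - c B = c (A - B) := by
    intro A B
    show U * A * star U - U * B * star U = U * (A - B) * star U
    rw [Matrix.mul_sub, Matrix.sub_mul]
  have c_trace : ∀ A, (c A).trace = A.trace := by
    intro A
    show (U * A * star U).trace = A.trace
    rw [Matrix.trace_mul_cycle, hUU, Matrix.one_mul]
  have c_conjT : ∀ A, (c A)ᴴ = c Aᴴ := by
    intro A
    show (U * A * star U)ᴴ = U * Aᴴ * star U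
    rw [Matrix.conjTranspose_mul, Matrix.conjTranspose_mul, Matrix.star_eq_conjTranspose,
      Matrix.conjTranspose_conjTranspose, Matrix.mul_assoc]
  have c_psd : ∀ {A}, A.PosSemidef → (c A).PosSemidef := by
    intro A hA
    have := hA.mul_mul_conjTranspose_same U
    simpa [hc, Matrix.star_eq_conjTranspose] using this
  -- the positive part, negative part, and support projection
  set Dp : Mat d := Matrix.diagonal fun i => ((max (e i) 0 : ℝ) : ℂ) with hDp
  set Dm : Mat d := Matrix.diagonal fun i => ((max (-e i) 0 : ℝ) : ℂ) with hDm
  set D0 : Mat d := Matrix.diagonal fun i => if 0 < e i then (1 : ℂ) else 0 with hD0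
  set δp : Mat d := c Dp with hδp
  set δm : Mat d := c Dm with hδm
  set P : Mat d := c D0 with hPdef
  have hDppsd : Dp.PosSemidef := Matrix.posSemidef_diagonal_iff.mpr fun i => by
    exact_mod_cast le_max_right (e i) 0
  have hDmpsd : Dm.PosSemidef := Matrix.posSemidef_diagonal_iff.mpr fun i => by
    exact_mod_cast le_max_right (-e i) 0
  have hδppsd : δp.PosSemidef := c_psd hDppsd
  have hδmpsd : δm.PosSemidef := c_psd hDmpsd
  have hD0H : D0ᴴ = D0 := by
    rw [hD0, Matrix.diagonal_conjTranspose]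
    refine congrArg Matrix.diagonal (funext fun i => ?_)
    by_cases h : 0 < e i <;> simp [h]
  have hPH : Pᴴ = P := by rw [hPdef, c_conjT, hD0H]
  have hD00 : D0 * D0 = D0 := by
    rw [hD0, Matrix.diagonal_mul_diagonal]
    refine congrArg Matrix.diagonal (funext fun i => ?_)
    by_cases h : 0 < e i <;> simp [h]
  have hPP : P * P = P := by rw [hPdef, c_mul, hD00]
  -- δ = c (diagonal e)
  have hδspec : δ = c (Matrix.diagonal fun i => ((e i : ℝ) : ℂ)) := by
    show δ = U * _ * star U
    have := hδH.spectral_theorem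
    rw [Unitary.conjStarAlgAut_apply] at this
    exact this
  have hDsub : Dp - Dm = Matrix.diagonal fun i => ((e i : ℝ) : ℂ) := by
    rw [hDp, hDm, Matrix.diagonal_sub]
    refine congrArg Matrix.diagonal (funext fun i => ?_)
    rw [← Complex.ofReal_sub, max_zero_sub_max_neg_zero_eq_self]
  have hδsplit : δ = δp - δm := by
    rw [hδp, hδm, c_sub, hDsub, hδspec]
  have hDPDP : D0 * Matrix.diagonal (fun i => ((e i : ℝ) : ℂ)) * D0 = Dp := by
    rw [Matrix.diagonal_mul_diagonal, Matrix.diagonal_mul_diagonal, hDp]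
    refine congrArg Matrix.diagonal (funext fun i => ?_)
    by_cases h : 0 < e i
    · simp [h, max_eq_left h.le]
    · simp [h, max_eq_right (not_lt.mp h)]
  have hPδP : P * δ * P = δp := by
    rw [hδspec, hPdef, hδp, c_mul, c_mul, hDPDP]
  have hmulzero : δp * δm = 0 := by
    rw [hδp, hδm, c_mul]
    have : Dp * Dm = 0 := by
      rw [hDp, hDm, Matrix.diagonal_mul_diagonal]
      have h0 : (fun i => ((max (e i) 0 : ℝ) : ℂ) * ((max (-e i) 0 : ℝ) : ℂ)) = fun _ => 0 := by
        funext i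
        rcases le_or_gt (e i) 0 with h | h
        · rw [max_eq_right h]; simp
        · rw [max_eq_right (by linarith : -e i ≤ 0)]; simp
      rw [h0, Matrix.diagonal_zero]
    rw [this]
    show U * 0 * star U = 0
    simp
  -- traces
  have htrp : δp.trace = Dp.trace := c_trace Dp
  have htrm : δm.trace = δp.trace := by
    have h : δ.trace = δp.trace - δm.trace := by rw [hδsplit, Matrix.trace_sub]
    rw [hδtr] at h
    exact (sub_eq_zero.mp h.symm).symm
  -- the fixed-point argument
  set A : Mat d := Φ δp with hA
  set B : Mat d := Φ δm with hB
  have hApsd : A.PosSemidef := aux_psd_preserving hΦ hδppsd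
  have hBpsd : B.PosSemidef := aux_psd_preserving hΦ hδmpsd
  have htrA : A.trace = δp.trace := aux_trace_preserving hΦ δp
  have htrB : B.trace = δp.trace := by rw [hB, aux_trace_preserving hΦ δm, htrm]
  have hkey : δp = P * A * P - P * B * P := by
    have : δ = A - B := by rw [← hδfix, hδsplit, map_sub]
    rw [← hPδP, this, Matrix.mul_sub, Matrix.sub_mul]
  have hPAPpsd : (P * A * P).PosSemidef := by
    have := hApsd.mul_mul_conjTranspose_same P
    rwa [hPH] at this
  have hPBPpsd : (P * B * P).PosSemidef := by
    have := hBpsd.mul_mul_conjTranspose_same P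
    rwa [hPH] at this
  have hQAQpsd : ((1 - P) * A * (1 - P)).PosSemidef := by
    have := hApsd.mul_mul_conjTranspose_same (1 - P)
    rwa [Matrix.conjTranspose_sub, hPH, Matrix.conjTranspose_one] at this
  have htrineq : (P * A * P).trace ≤ δp.trace := by
    have h1 : 0 ≤ ((1 - P) * A * (1 - P)).trace := aux_trace_nonneg hQAQpsd
    rw [aux_trace_QAQ hPP, htrA] at h1
    exact sub_nonneg.mp h1
  have e1 : δp.trace = (P * A * P).trace - (P * B * P).trace := by
    rw [hkey, Matrix.trace_sub]
  have hPBP0 : P * B * P = 0 := by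
    refine aux_psd_trace_zero hPBPpsd (le_antisymm ?_ (aux_trace_nonneg hPBPpsd))
    have : (P * B * P).trace = (P * A * P).trace - δp.trace := by
      rw [e1]; ring
    rw [this]
    exact sub_nonpos.mpr htrineq
  have e2 : (P * A * P).trace = δp.trace := by
    rw [e1, hPBP0, Matrix.trace_zero, sub_zero]
  have hQAQ0 : (1 - P) * A * (1 - P) = 0 := by
    refine aux_psd_trace_zero hQAQpsd ?_
    rw [aux_trace_QAQ hPP, htrA, e2, sub_self]
  have hPAP : P * A * P = A := aux_support hApsd hPH hQAQ0
  have hfixp : Φ δp = δp := by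
    have hthis : A = δp := by rw [hkey, hPBP0, sub_zero]; exact hPAP.symm
    rw [← hA]; exact hthis
  have hfixm : Φ δm = δm := by
    have h : δ = Φ δp - Φ δm := by rw [← map_sub, ← hδsplit, hδfix]
    rw [hfixp] at h
    have e3 : Φ δm = δp - δ := by rw [h]; abel
    have e4 : δm = δp - δ := by rw [hδsplit]; abel
    rw [e3, e4]
  -- positivity of the normalization constant
  set r : ℝ := ∑ i, max (e i) 0 with hr
  have htrr : δp.trace = (r : ℂ) := by
    rw [htrp, hDp, Matrix.trace_diagonal, hr]
    push_cast
    rfl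
  have hrnn : 0 ≤ r := Finset.sum_nonneg fun i _ => le_max_right _ _
  have hrne : r ≠ 0 := by
    intro h0
    apply hδne
    have hp0 : δp = 0 := aux_psd_trace_zero hδppsd (by rw [htrr, h0]; simp)
    have hm0 : δm = 0 := aux_psd_trace_zero hδmpsd (by rw [htrm, htrr, h0]; simp)
    rw [hδsplit, hp0, hm0, sub_zero]
  have hrpos : 0 < r := lt_of_le_of_ne hrnn (Ne.symm hrne)
  -- the two orthogonal fixed states
  refine ⟨((r⁻¹ : ℝ) : ℂ) • δp, ((r⁻¹ : ℝ) : ℂ) • δm, ⟨?_, ?_⟩, ⟨?_, ?_⟩, ?_, ?_, ?_⟩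
  · exact aux_psd_smul hδppsd (inv_nonneg.mpr hrnn)
  · rw [Matrix.trace_smul, smul_eq_mul, htrr, ← Complex.ofReal_mul, inv_mul_cancel₀ hrne,
      Complex.ofReal_one]
  · exact aux_psd_smul hδmpsd (inv_nonneg.mpr hrnn)
  · rw [Matrix.trace_smul, smul_eq_mul, htrm, htrr, ← Complex.ofReal_mul, inv_mul_cancel₀ hrne,
      Complex.ofReal_one]
  · rw [LinearMap.map_smul, hfixp]
  · rw [LinearMap.map_smul, hfixm]
  · rw [smul_mul_assoc, mul_smul_comm, hmulzero, smul_zero, smul_zero]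
end
end

section
/- Let ρ and σ be density matrices on a finite-dimensional Hilbert space. There exist q ∈ (0,1] and a density matrix τ with ρ = q σ + (1-q) τ if and only if the support of σ is contained in the support of ρ. -/
open Matrix
open scoped ComplexOrder

noncomputable section

namespace AuxSupp

variable {d : ℕ}

lemma psd_smul_real {A : Mat d} (hA : A.PosSemidef) {c : ℝ} (hc : 0 ≤ c) :
    ((c : ℂ) • A).PosSemidef := by
  refine Matrix.PosSemidef.of_dotProduct_mulVec_nonneg ?_ fun x => ?_
  · unfold Matrix.IsHermitian
    rw [Matrix.conjTranspose_smul, hA.1.eq, Complex.star_def, Complex.conj_ofReal]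
  · rw [Matrix.smul_mulVec, dotProduct_smul, smul_eq_mul]
    exact mul_nonneg (Complex.zero_le_real.mpr hc) (hA.dotProduct_mulVec_nonneg x)

/-- From support inclusion to kernel inclusion. -/
lemma ker_of_supp_le {ρ σ : Mat d} (hρ : ρ.IsHermitian) (hσ : σ.PosSemidef)
    (h : supp σ ≤ supp ρ) : ∀ x, ρ *ᵥ x = 0 → σ *ᵥ x = 0 := by
  intro x hx
  have hmem : σ *ᵥ x ∈ supp ρ := h ⟨x, rfl⟩
  obtain ⟨z, hz⟩ := hmem
  have hvz : σ *ᵥ x = ρ *ᵥ z := by simpa [Matrix.mulVecLin_apply] using hz.symm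
  have h0 : star x ⬝ᵥ σ *ᵥ x = 0 := by
    have hrow : star x ᵥ* ρ = 0 := by
      have := congrArg star hx
      rwa [Matrix.star_mulVec, hρ.eq, star_zero] at this
    rw [hvz, Matrix.dotProduct_mulVec, hrow, zero_dotProduct]
  exact (hσ.dotProduct_mulVec_zero_iff x).mp h0

/-- From kernel inclusion to support inclusion, using the spectral theorem for `ρ`. -/
lemma supp_le_of_ker {ρ σ : Mat d} (hρ : ρ.PosSemidef) (hσ : σ.IsHermitian)
    (h : ∀ x, ρ *ᵥ x = 0 → σ *ᵥ x = 0) : supp σ ≤ supp ρ := by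
  have hH : ρ.IsHermitian := hρ.1
  set U : Mat d := (hH.eigenvectorUnitary : Mat d) with hUdef
  set c : Fin d → ℂ := RCLike.ofReal ∘ hH.eigenvalues with hcdef
  have hspec : ρ = U * diagonal c * star U := hH.spectral_theorem
  have hUU : U * star U = 1 := (Matrix.mem_unitaryGroup_iff).mp hH.eigenvectorUnitary.2
  have hUU' : star U * U = 1 := (Matrix.mem_unitaryGroup_iff').mp hH.eigenvectorUnitary.2
  rintro x ⟨y, rfl⟩
  set w : Fin d → ℂ := star U *ᵥ (σ *ᵥ y) with hwdef
  -- eigencolumns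
  have hcol : ∀ i, ρ *ᵥ (U *ᵥ Pi.single i 1) = c i • (U *ᵥ Pi.single i 1) := by
    intro i
    have hρU : ρ * U = U * diagonal c := by
      rw [hspec, Matrix.mul_assoc, hUU', Matrix.mul_one]
    rw [Matrix.mulVec_mulVec, hρU, ← Matrix.mulVec_mulVec, Matrix.diagonal_mulVec_single, mul_one]
    have hsingle : Pi.single i (c i) = c i • (Pi.single i 1 : Fin d → ℂ) := by
      rw [← Pi.single_smul, smul_eq_mul, mul_one]
    rw [hsingle, Matrix.mulVec_smul]
  have hwi : ∀ (i : Fin d) (v : Fin d → ℂ),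
      (star U *ᵥ v) i = star (U *ᵥ Pi.single i 1) ⬝ᵥ v := by
    intro i v
    simp [Matrix.mulVec, dotProduct, Matrix.star_apply, Matrix.mulVec_single]
  have hw0 : ∀ i, c i = 0 → w i = 0 := by
    intro i hci
    have hσcol : σ *ᵥ (U *ᵥ Pi.single i 1) = 0 := by
      apply h
      rw [hcol i, hci, zero_smul]
    have hthis : w i = star (σ *ᵥ (U *ᵥ Pi.single i 1)) ⬝ᵥ y := by
      rw [Matrix.star_mulVec, hσ.eq, ← Matrix.dotProduct_mulVec]
      exact hwi i (σ *ᵥ y)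
    rw [hthis, hσcol, star_zero, zero_dotProduct]
  refine ⟨U *ᵥ (fun i => if c i = 0 then 0 else (c i)⁻¹ * w i), ?_⟩
  rw [Matrix.mulVecLin_apply, Matrix.mulVec_mulVec, hspec, Matrix.mul_assoc (U * diagonal c), hUU',
    Matrix.mul_one, ← Matrix.mulVec_mulVec]
  have hDz : diagonal c *ᵥ (fun i => if c i = 0 then 0 else (c i)⁻¹ * w i) = w := by
    funext i
    rw [Matrix.mulVec_diagonal]
    by_cases hci : c i = 0
    · rw [if_pos hci, mul_zero, hw0 i hci]
    · rw [if_neg hci, ← mul_assoc, mul_inv_cancel₀ hci, one_mul]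
  rw [hDz, hwdef, Matrix.mulVec_mulVec, hUU, Matrix.one_mulVec, Matrix.mulVecLin_apply]

/-- If `σ` is PSD with trace one then `1 - σ` is PSD. -/
lemma one_sub_psd {σ : Mat d} (hσ : σ.PosSemidef) (ht : σ.trace = 1) :
    ((1 : Mat d) - σ).PosSemidef := by
  have hH : σ.IsHermitian := hσ.1
  set W : Mat d := (hH.eigenvectorUnitary : Mat d) with hWdef
  set c : Fin d → ℂ := RCLike.ofReal ∘ hH.eigenvalues with hcdef
  have hspec : σ = W * diagonal c * star W := hH.spectral_theorem
  have hWW : W * star W = 1 := (Matrix.mem_unitaryGroup_iff).mp hH.eigenvectorUnitary.2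
  have hWW' : star W * W = 1 := (Matrix.mem_unitaryGroup_iff').mp hH.eigenvectorUnitary.2
  have htr : ∑ i, hH.eigenvalues i = 1 := by
    have : σ.trace = ∑ i, c i := by
      rw [hspec, Matrix.trace_mul_cycle, hWW', Matrix.one_mul, Matrix.trace_diagonal]
    rw [this] at ht
    simp only [hcdef, Function.comp_apply] at ht
    have h2 : ((∑ i, hH.eigenvalues i : ℝ) : ℂ) = 1 := by
      push_cast; simpa [RCLike.ofReal_alg] using ht
    exact_mod_cast h2
  have hle : ∀ i, hH.eigenvalues i ≤ 1 := by
    intro i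
    rw [← htr]
    exact Finset.single_le_sum (fun j _ => hσ.eigenvalues_nonneg j) (Finset.mem_univ i)
  have key : ((1 : Mat d) - σ) = W * diagonal (fun i => 1 - c i) * star W := by
    have : diagonal (fun i => 1 - c i) = 1 - diagonal c := by
      rw [← Matrix.diagonal_one, Matrix.diagonal_sub]
    rw [this, Matrix.mul_sub, Matrix.mul_one, Matrix.sub_mul, hWW, ← hspec]
  rw [key, Matrix.star_eq_conjTranspose]
  refine Matrix.PosSemidef.mul_mul_conjTranspose_same ?_ W
  refine Matrix.posSemidef_diagonal_iff.mpr fun i => ?_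
  have h1 : ((1 - hH.eigenvalues i : ℝ) : ℂ) = 1 - c i := by push_cast; rfl
  rw [← h1]
  exact Complex.zero_le_real.mpr (by linarith [hle i])

lemma exists_eps {ρ σ : Mat d} (hρp : ρ.PosSemidef) (hρt : ρ.trace = 1)
    (hσp : σ.PosSemidef) (hσt : σ.trace = 1)
    (h : ∀ x, ρ *ᵥ x = 0 → σ *ᵥ x = 0) :
    ∃ ε : ℝ, 0 < ε ∧ (ρ - (ε : ℂ) • σ).PosSemidef := by
  classical
  have hH : ρ.IsHermitian := hρp.1
  set U : Mat d := (hH.eigenvectorUnitary : Mat d) with hUdef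
  set μ : Fin d → ℝ := hH.eigenvalues with hμdef
  set c : Fin d → ℂ := RCLike.ofReal ∘ μ with hcdef
  have hspec : ρ = U * diagonal c * star U := hH.spectral_theorem
  have hUU : U * star U = 1 := (Matrix.mem_unitaryGroup_iff).mp hH.eigenvectorUnitary.2
  have hUU' : star U * U = 1 := (Matrix.mem_unitaryGroup_iff').mp hH.eigenvectorUnitary.2
  have hρU : ρ * U = U * diagonal c := by
    rw [hspec, Matrix.mul_assoc, hUU', Matrix.mul_one]
  set σ' : Mat d := star U * σ * U with hσ'def
  have hσ'p : σ'.PosSemidef := by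
    have := hσp.conjTranspose_mul_mul_same (B := U)
    rwa [← Matrix.star_eq_conjTranspose] at this
  have hσ't : σ'.trace = 1 := by
    rw [hσ'def, Matrix.trace_mul_comm, ← Matrix.mul_assoc, hUU, Matrix.one_mul]
    exact hσt
  have hker' : ∀ x, diagonal c *ᵥ x = 0 → σ' *ᵥ x = 0 := by
    intro x hx
    have h1 : ρ *ᵥ (U *ᵥ x) = 0 := by
      rw [Matrix.mulVec_mulVec, hρU, ← Matrix.mulVec_mulVec, hx, Matrix.mulVec_zero]
    have h2 := h _ h1
    show (star U * σ * U) *ᵥ x = 0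
    rw [← Matrix.mulVec_mulVec, ← Matrix.mulVec_mulVec, h2, Matrix.mulVec_zero]
  set S : Finset (Fin d) := Finset.univ.filter (fun i => μ i ≠ 0) with hSdef
  have hSne : S.Nonempty := by
    obtain ⟨i, hi⟩ : ∃ i, μ i ≠ 0 := by
      by_contra hall; push_neg at hall
      have hc0 : c = 0 := by
        funext j
        rw [hcdef]
        show RCLike.ofReal (μ j) = (0 : ℂ)
        rw [hall j, RCLike.ofReal_zero]
      have hρ0 : ρ = 0 := by
        rw [hspec, hc0, show Matrix.diagonal (0 : Fin d → ℂ) = 0 from Matrix.diagonal_zero,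
          Matrix.mul_zero, Matrix.zero_mul]
      rw [hρ0] at hρt; simp at hρt
    exact ⟨i, Finset.mem_filter.mpr ⟨Finset.mem_univ i, hi⟩⟩
  set ε := S.inf' hSne μ with hεdef
  have hεpos : 0 < ε := by
    rw [hεdef, Finset.lt_inf'_iff]
    intro i hi
    exact lt_of_le_of_ne (hρp.eigenvalues_nonneg i) (Ne.symm (Finset.mem_filter.mp hi).2)
  have hεle : ∀ i ∈ S, ε ≤ μ i := fun i hi => Finset.inf'_le μ hi
  have hcnn : ∀ i, 0 ≤ c i := fun i => by
    simpa [hcdef] using Complex.zero_le_real.mpr (hρp.eigenvalues_nonneg i)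
  refine ⟨ε, hεpos, ?_⟩
  have hone : ((1 : Mat d) - σ').PosSemidef := one_sub_psd hσ'p hσ't
  have hkey : (diagonal c - (ε:ℂ) • σ').PosSemidef := by
    refine Matrix.PosSemidef.of_dotProduct_mulVec_nonneg ?_ ?_
    · exact ((posSemidef_diagonal_iff.mpr hcnn).1).sub (psd_smul_real hσ'p hεpos.le).1
    · intro x
      set p : Fin d → ℂ := fun i => if μ i = 0 then 0 else x i with hpdef
      set k : Fin d → ℂ := fun i => if μ i = 0 then x i else 0 with hkdef
      have hxpk : x = p + k := funext fun i => by
        by_cases hi : μ i = 0 <;> simp [hpdef, hkdef, hi]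
      have hDk : diagonal c *ᵥ k = 0 := funext fun i => by
        rw [Matrix.mulVec_diagonal]
        by_cases hi : μ i = 0 <;> simp [hkdef, hcdef, hi]
      have hσk : σ' *ᵥ k = 0 := hker' k hDk
      have hstep : star x ⬝ᵥ σ' *ᵥ x = star p ⬝ᵥ σ' *ᵥ p := by
        conv_lhs => rw [hxpk]
        rw [Matrix.mulVec_add, hσk, add_zero, star_add, add_dotProduct]
        have hk0 : star k ⬝ᵥ σ' *ᵥ p = 0 := by
          rw [Matrix.dotProduct_mulVec, ← hσ'p.1.eq, ← Matrix.star_mulVec, hσk, star_zero,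
            zero_dotProduct]
        rw [hk0, add_zero]
      have hbound : star p ⬝ᵥ σ' *ᵥ p ≤ star p ⬝ᵥ p := by
        have h0 := hone.dotProduct_mulVec_nonneg p
        rw [Matrix.sub_mulVec, dotProduct_sub, Matrix.one_mulVec] at h0
        exact sub_nonneg.mp h0
      rw [Matrix.sub_mulVec, dotProduct_sub, Matrix.smul_mulVec,
        dotProduct_smul, smul_eq_mul, hstep]
      refine sub_nonneg.mpr ?_
      have hD : star x ⬝ᵥ diagonal c *ᵥ x = ∑ i, c i * (star (x i) * x i) := by
        unfold dotProduct
        refine Finset.sum_congr rfl fun i _ => ?_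
        rw [Matrix.mulVec_diagonal, Pi.star_apply]
        ring
      have hpp : star p ⬝ᵥ p = ∑ i ∈ S, star (x i) * x i := by
        rw [hSdef, Finset.sum_filter]
        refine Finset.sum_congr rfl fun i _ => ?_
        by_cases hi : μ i = 0 <;> simp [hpdef, hi]
      calc (ε:ℂ) * (star p ⬝ᵥ σ' *ᵥ p)
          ≤ (ε:ℂ) * (star p ⬝ᵥ p) :=
            mul_le_mul_of_nonneg_left hbound (Complex.zero_le_real.mpr hεpos.le)
        _ = ∑ i ∈ S, (ε:ℂ) * (star (x i) * x i) := by rw [hpp, Finset.mul_sum]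
        _ ≤ ∑ i ∈ S, c i * (star (x i) * x i) := by
            refine Finset.sum_le_sum fun i hi => ?_
            refine mul_le_mul_of_nonneg_right ?_ (star_mul_self_nonneg _)
            have : ((ε:ℝ):ℂ) ≤ ((μ i : ℝ):ℂ) := Complex.real_le_real.mpr (hεle i hi)
            simpa [hcdef] using this
        _ ≤ ∑ i, c i * (star (x i) * x i) :=
            Finset.sum_le_sum_of_subset_of_nonneg (Finset.filter_subset _ _)
              (fun i _ _ => mul_nonneg (hcnn i) (star_mul_self_nonneg _))
        _ = star x ⬝ᵥ diagonal c *ᵥ x := hD.symm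
  have hσback : U * σ' * star U = σ := by
    rw [hσ'def]
    simp only [← Matrix.mul_assoc]
    rw [hUU, Matrix.one_mul, Matrix.mul_assoc, hUU, Matrix.mul_one]
  have hfin : ρ - (ε:ℂ) • σ = U * (diagonal c - (ε:ℂ) • σ') * star U := by
    rw [Matrix.mul_sub, Matrix.sub_mul, ← hspec, Matrix.mul_smul, Matrix.smul_mul, hσback]
  rw [hfin, Matrix.star_eq_conjTranspose]
  exact hkey.mul_mul_conjTranspose_same U

end AuxSupp

/-- For density matrices `ρ, σ`: `ρ = q σ + (1-q) τ` for some `q ∈ (0,1]` and density matrix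
`τ` if and only if the support of `σ` is contained in the support of `ρ`. -/
theorem convex_component_iff_supp_le {d : ℕ} (ρ σ : Mat d)
    (hρ : IsDensity ρ) (hσ : IsDensity σ) :
    (∃ q : ℝ, 0 < q ∧ q ≤ 1 ∧ ∃ τ : Mat d, IsDensity τ ∧
      ρ = (q : ℂ) • σ + ((1 - q : ℝ) : ℂ) • τ) ↔ supp σ ≤ supp ρ := by
  constructor
  · rintro ⟨q, hq0, hq1, τ, hτ, hEq⟩
    refine AuxSupp.supp_le_of_ker hρ.1 hσ.1.1 fun x hx => ?_
    have hval : (q:ℂ) * (star x ⬝ᵥ σ *ᵥ x) + ((1 - q : ℝ):ℂ) * (star x ⬝ᵥ τ *ᵥ x) = 0 := by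
      have := congrArg (fun M : Mat d => star x ⬝ᵥ M *ᵥ x) hEq
      simp only [Matrix.add_mulVec, dotProduct_add, Matrix.smul_mulVec,
        dotProduct_smul, smul_eq_mul] at this
      rw [← this, hx, dotProduct_zero]
    have ha : 0 ≤ (q:ℂ) * (star x ⬝ᵥ σ *ᵥ x) :=
      mul_nonneg (Complex.zero_le_real.mpr hq0.le) (hσ.1.dotProduct_mulVec_nonneg x)
    have hb : 0 ≤ ((1 - q : ℝ):ℂ) * (star x ⬝ᵥ τ *ᵥ x) :=
      mul_nonneg (Complex.zero_le_real.mpr (by linarith)) (hτ.1.dotProduct_mulVec_nonneg x)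
    have ha0 : (q:ℂ) * (star x ⬝ᵥ σ *ᵥ x) = 0 := by
      refine le_antisymm ?_ ha
      calc (q:ℂ) * (star x ⬝ᵥ σ *ᵥ x)
          ≤ (q:ℂ) * (star x ⬝ᵥ σ *ᵥ x) + ((1 - q : ℝ):ℂ) * (star x ⬝ᵥ τ *ᵥ x) :=
            le_add_of_nonneg_right hb
        _ = 0 := hval
    have hq0' : (q:ℂ) ≠ 0 := by exact_mod_cast hq0.ne'
    have : star x ⬝ᵥ σ *ᵥ x = 0 := by
      rcases mul_eq_zero.mp ha0 with h' | h'
      · exact absurd h' hq0'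
      · exact h'
    exact (hσ.1.dotProduct_mulVec_zero_iff x).mp this
  · intro hsupp
    have hker : ∀ x, ρ *ᵥ x = 0 → σ *ᵥ x = 0 :=
      AuxSupp.ker_of_supp_le hρ.1.1 hσ.1 hsupp
    obtain ⟨ε, hε0, hPSD⟩ := AuxSupp.exists_eps hρ.1 hρ.2 hσ.1 hσ.2 hker
    set q : ℝ := min ε 2⁻¹ with hqdef
    have hq0 : 0 < q := lt_min hε0 (by norm_num)
    have hqhalf : q ≤ 2⁻¹ := min_le_right _ _
    have hq1 : q ≤ 1 := hqhalf.trans (by norm_num)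
    have hqlt1 : q < 1 := lt_of_le_of_lt hqhalf (by norm_num)
    have h1q : (0:ℝ) < 1 - q := by linarith
    have hPSDq : (ρ - (q:ℂ) • σ).PosSemidef := by
      have hsplit : ρ - (q:ℂ) • σ = (ρ - (ε:ℂ) • σ) + ((ε - q : ℝ):ℂ) • σ := by
        have : ((ε - q : ℝ):ℂ) = (ε:ℂ) - (q:ℂ) := by push_cast; ring
        rw [this, sub_smul]
        abel
      rw [hsplit]
      exact hPSD.add (AuxSupp.psd_smul_real hσ.1 (by simp [hqdef, min_le_left]))
    set τ : Mat d := (((1 - q : ℝ)⁻¹ : ℝ) : ℂ) • (ρ - (q:ℂ) • σ) with hτdef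
    have hτpsd : τ.PosSemidef := AuxSupp.psd_smul_real hPSDq (by positivity)
    have hτtr : τ.trace = 1 := by
      rw [hτdef, Matrix.trace_smul, Matrix.trace_sub, Matrix.trace_smul, hρ.2, hσ.2,
        smul_eq_mul, smul_eq_mul, mul_one]
      rw [show ((1:ℂ) - (q:ℂ)) = ((1 - q : ℝ):ℂ) by push_cast; ring,
        ← Complex.ofReal_mul, inv_mul_cancel₀ h1q.ne', Complex.ofReal_one]
    refine ⟨q, hq0, hq1, τ, ⟨hτpsd, hτtr⟩, ?_⟩
    rw [hτdef, smul_smul]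
    have hcoef : ((1 - q : ℝ) : ℂ) * (((1 - q : ℝ)⁻¹ : ℝ) : ℂ) = 1 := by
      rw [← Complex.ofReal_mul, mul_inv_cancel₀ h1q.ne', Complex.ofReal_one]
    rw [hcoef, one_smul, add_sub_cancel]
end
end

section
/- Let M be a quantum channel with fixed point state ρ*. If ω ∈ ℂ with |ω| = 1 is an eigenvalue of the adjoint M† with eigenvector A, then ω̄ is an eigenvalue of M with eigenvector A ρ*. Conversely, if ρ* > 0 is strictly positive and M(Ã) = ω̄ Ã for some nonzero Ã, then M†(Ã ρ*⁻¹) = ω Ã ρ*⁻¹. -/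
open Matrix
open scoped ComplexOrder

noncomputable section

section Aux

lemma trace_form {d : ℕ} (X : Mat d) :
    (Xᴴ * X).trace = ((∑ j, ∑ i, Complex.normSq (X i j) : ℝ) : ℂ) := by
  rw [Matrix.trace]
  push_cast
  refine Finset.sum_congr rfl fun j _ => ?_
  rw [Matrix.diag_apply, Matrix.mul_apply]
  refine Finset.sum_congr rfl fun i _ => ?_
  rw [Matrix.conjTranspose_apply]
  exact (Complex.normSq_eq_conj_mul_self).symm

lemma eq_zero_of_trace_eq {d : ℕ} {X : Mat d} (h : (Xᴴ * X).trace = 0) : X = 0 := by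
  rw [trace_form, Complex.ofReal_eq_zero] at h
  have h2 := (Finset.sum_eq_zero_iff_of_nonneg (fun j _ =>
    Finset.sum_nonneg fun i _ => Complex.normSq_nonneg _)).1 h
  ext i j
  have h3 := (Finset.sum_eq_zero_iff_of_nonneg (fun i _ =>
    Complex.normSq_nonneg _)).1 (h2 j (Finset.mem_univ j)) i (Finset.mem_univ i)
  simpa using Complex.normSq_eq_zero.1 h3

lemma key_zero {d n : ℕ} (Z : Fin n → Mat d) (S : Mat d)
    (h : ∑ i, ((Z i * S)ᴴ * (Z i * S)).trace = 0) : ∀ i, Z i * S = 0 := by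
  have h' : ∑ i, (∑ j, ∑ k, Complex.normSq ((Z i * S) k j) : ℝ) = 0 := by
    simp_rw [trace_form] at h
    exact_mod_cast h
  intro i
  apply eq_zero_of_trace_eq
  rw [trace_form, Complex.ofReal_eq_zero]
  exact (Finset.sum_eq_zero_iff_of_nonneg (fun i _ =>
    Finset.sum_nonneg fun j _ => Finset.sum_nonneg fun k _ => Complex.normSq_nonneg _)).1
    h' i (Finset.mem_univ i)

lemma adj_formula {d n : ℕ} (Φ Φd : Mat d →ₗ[ℂ] Mat d) (K : Fin n → Mat d)
    (hK1 : ∀ A, Φ A = ∑ i, K i * A * (K i)ᴴ)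
    (hadj : ∀ A B : Mat d, (Aᴴ * Φ B).trace = ((Φd A)ᴴ * B).trace)
    (A : Mat d) : Φd A = ∑ i, (K i)ᴴ * A * K i := by
  have hpair : ∀ B : Mat d, ((Φd A - ∑ i, (K i)ᴴ * A * K i)ᴴ * B).trace = 0 := by
    intro B
    rw [Matrix.conjTranspose_sub, Matrix.sub_mul, Matrix.trace_sub, ← hadj, hK1,
      Matrix.mul_sum, Matrix.trace_sum, Matrix.conjTranspose_sum, Finset.sum_mul,
      Matrix.trace_sum, sub_eq_zero]
    refine Finset.sum_congr rfl fun i _ => ?_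
    rw [Matrix.conjTranspose_mul, Matrix.conjTranspose_mul, Matrix.conjTranspose_conjTranspose]
    rw [show Aᴴ * (K i * B * (K i)ᴴ) = Aᴴ * (K i * B) * (K i)ᴴ by noncomm_ring,
      Matrix.trace_mul_cycle]
    noncomm_ring
  have h0 := eq_zero_of_trace_eq (hpair (Φd A - ∑ i, (K i)ᴴ * A * K i))
  exact sub_eq_zero.1 h0

lemma expand_term {d : ℕ} (Kk B ρ : Mat d) (ω : ℂ) :
    ((Kk*B - (starRingEnd ℂ ω)•(B*Kk))ᴴ * (Kk*B - (starRingEnd ℂ ω)•(B*Kk)) * ρ).trace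
    = (Bᴴ*(Kkᴴ*Kk)*(B*ρ)).trace - (starRingEnd ℂ ω) * ((Kkᴴ*B*Kk)*(ρ*Bᴴ)).trace
      - ω * ((Kkᴴ*Bᴴ*Kk)*(B*ρ)).trace + (ω*(starRingEnd ℂ ω)) * ((Bᴴ*B)*(Kk*ρ*Kkᴴ)).trace := by
  simp only [conjTranspose_sub, conjTranspose_smul, conjTranspose_mul, Matrix.sub_mul,
    Matrix.mul_sub, Matrix.smul_mul, Matrix.mul_smul, smul_smul, trace_sub, trace_smul,
    RCLike.star_def, Complex.conj_conj, smul_eq_mul, mul_assoc]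
  rw [Matrix.trace_mul_comm (Bᴴ) (Kkᴴ*(B*(Kk*ρ))), Matrix.trace_mul_comm (Kkᴴ) (Bᴴ*(B*(Kk*ρ)))]
  simp only [mul_assoc]
  ring

lemma comm_lemma {d n : ℕ} (K : Fin n → Mat d) (hK2 : ∑ i, (K i)ᴴ * K i = 1)
    (ρ S B : Mat d) (hS : Sᴴ = S) (hSS : S * S = ρ)
    (hfixρ : ∑ i, K i * ρ * (K i)ᴴ = ρ)
    (ω : ℂ) (hωc : ω * starRingEnd ℂ ω = 1)
    (h2 : ∑ i, (((K i)ᴴ*B*(K i))*(ρ*Bᴴ)).trace = ω * ((Bᴴ*(B*ρ)).trace))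
    (h3 : ∑ i, (((K i)ᴴ*Bᴴ*(K i))*(B*ρ)).trace = (starRingEnd ℂ ω) * ((Bᴴ*(B*ρ)).trace)) :
    ∀ i, (K i * B - (starRingEnd ℂ ω)•(B * K i)) * ρ = 0 := by
  set Z : Fin n → Mat d := fun i => K i * B - (starRingEnd ℂ ω)•(B * K i) with hZ
  have htr : ∀ W : Mat d, ((W * S)ᴴ * (W * S)).trace = (Wᴴ * W * ρ).trace := by
    intro W
    rw [Matrix.conjTranspose_mul, hS, Matrix.mul_assoc S Wᴴ (W*S),
      Matrix.trace_mul_comm S (Wᴴ*(W*S)), Matrix.mul_assoc Wᴴ (W*S) S,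
      Matrix.mul_assoc W S S, hSS, ← Matrix.mul_assoc]
  have e1 : ∑ i, (Bᴴ*((K i)ᴴ*K i)*(B*ρ)).trace = (Bᴴ*(B*ρ)).trace := by
    rw [← Matrix.trace_sum]
    congr 1
    rw [← Finset.sum_mul, ← Matrix.mul_sum, hK2, Matrix.mul_one]
  have e4 : ∑ i, ((Bᴴ*B)*(K i*ρ*(K i)ᴴ)).trace = ((Bᴴ*B)*ρ).trace := by
    rw [← Matrix.trace_sum]
    congr 1
    rw [← Matrix.mul_sum, hfixρ]
  have hzero : ∑ i, ((Z i * S)ᴴ * (Z i * S)).trace = 0 := by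
    calc ∑ i, ((Z i * S)ᴴ * (Z i * S)).trace = ∑ i, ((Z i)ᴴ * Z i * ρ).trace :=
          Finset.sum_congr rfl fun i _ => htr (Z i)
      _ = ∑ i, ((Bᴴ*((K i)ᴴ*K i)*(B*ρ)).trace - (starRingEnd ℂ ω) * (((K i)ᴴ*B*K i)*(ρ*Bᴴ)).trace
            - ω * (((K i)ᴴ*Bᴴ*K i)*(B*ρ)).trace
            + (ω*(starRingEnd ℂ ω)) * ((Bᴴ*B)*(K i*ρ*(K i)ᴴ)).trace) :=
          Finset.sum_congr rfl fun i _ => expand_term (K i) B ρ ω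
      _ = 0 := by
          rw [Finset.sum_add_distrib, Finset.sum_sub_distrib, Finset.sum_sub_distrib,
            ← Finset.mul_sum, ← Finset.mul_sum, ← Finset.mul_sum, e1, e4, h2, h3,
            Matrix.mul_assoc]
          linear_combination (-(Bᴴ*(B*ρ)).trace) * hωc
  intro i
  have := key_zero Z S hzero i
  calc Z i * ρ = Z i * (S * S) := by rw [hSS]
    _ = (Z i * S) * S := by rw [Matrix.mul_assoc]
    _ = 0 := by rw [this, Matrix.zero_mul]

end Aux

/-- Peripheral eigenvectors of the adjoint map give peripheral eigenvectors of the channel by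
multiplication with the fixed point state, and conversely when the fixed point is faithful. -/
theorem peripheral_eigenvector_adjoint_correspondence {d : ℕ} (Φ Φd : Mat d →ₗ[ℂ] Mat d)
    (hΦ : IsCPTP Φ) (hadj : ∀ A B : Mat d, (Aᴴ * Φ B).trace = ((Φd A)ᴴ * B).trace)
    (ρs : Mat d) (hρs : IsDensity ρs) (hfix : Φ ρs = ρs)
    (ω : ℂ) (hω : ‖ω‖ = 1) :
    (∀ A : Mat d, A ≠ 0 → Φd A = ω • A →
      Φ (A * ρs) = (starRingEnd ℂ ω) • (A * ρs)) ∧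
    (ρs.PosDef → ∀ At : Mat d, At ≠ 0 → Φ At = (starRingEnd ℂ ω) • At →
      Φd (At * ρs⁻¹) = ω • (At * ρs⁻¹)) := by
  obtain ⟨n, K, hK1, hK2⟩ := hΦ
  have hωc : ω * starRingEnd ℂ ω = 1 := by
    rw [Complex.mul_conj]
    norm_cast
    rw [Complex.normSq_eq_norm_sq, hω, one_pow]
  have hfixρ : ∑ i, K i * ρs * (K i)ᴴ = ρs := by rw [← hK1]; exact hfix
  have hΦdf := adj_formula Φ Φd K hK1 hadj
  obtain ⟨S, hS, hSS⟩ : ∃ S : Mat d, Sᴴ = S ∧ S * S = ρs :=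
    by
      open scoped MatrixOrder in
      exact ⟨CFC.sqrt ρs, (CFC.sqrt_nonneg ρs).posSemidef.1, CFC.sqrt_mul_sqrt_self ρs hρs.1.nonneg⟩
  constructor
  · intro A _ hAeig
    have hsum : ∑ i, (K i)ᴴ * A * K i = ω • A := by rw [← hΦdf]; exact hAeig
    have hsumH : ∑ i, (K i)ᴴ * Aᴴ * K i = (starRingEnd ℂ ω) • Aᴴ := by
      calc ∑ i, (K i)ᴴ * Aᴴ * K i = (∑ i, (K i)ᴴ * A * K i)ᴴ := by
            rw [Matrix.conjTranspose_sum]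
            exact Finset.sum_congr rfl fun i _ => by
              rw [Matrix.conjTranspose_mul, Matrix.conjTranspose_mul,
                Matrix.conjTranspose_conjTranspose, Matrix.mul_assoc]
        _ = (starRingEnd ℂ ω) • Aᴴ := by
            rw [hsum, Matrix.conjTranspose_smul, RCLike.star_def]
    have h2 : ∑ i, (((K i)ᴴ*A*(K i))*(ρs*Aᴴ)).trace = ω * ((Aᴴ*(A*ρs)).trace) := by
      rw [← Matrix.trace_sum, ← Finset.sum_mul, hsum, Matrix.smul_mul, Matrix.trace_smul,
        smul_eq_mul]
      congr 1
      rw [← Matrix.mul_assoc, Matrix.trace_mul_cycle, Matrix.mul_assoc]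
    have h3 : ∑ i, (((K i)ᴴ*Aᴴ*(K i))*(A*ρs)).trace
        = (starRingEnd ℂ ω) * ((Aᴴ*(A*ρs)).trace) := by
      rw [← Matrix.trace_sum, ← Finset.sum_mul, hsumH, Matrix.smul_mul, Matrix.trace_smul,
        smul_eq_mul]
    have hZ := comm_lemma K hK2 ρs S A hS hSS hfixρ ω hωc h2 h3
    have hcm : ∀ i, K i * (A * ρs) = (starRingEnd ℂ ω) • (A * (K i * ρs)) := by
      intro i
      have h0 := hZ i
      rw [Matrix.sub_mul, sub_eq_zero] at h0
      calc K i * (A * ρs) = (K i * A) * ρs := by rw [Matrix.mul_assoc]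
        _ = ((starRingEnd ℂ ω) • (A * K i)) * ρs := h0
        _ = (starRingEnd ℂ ω) • (A * (K i * ρs)) := by
            rw [Matrix.smul_mul, Matrix.mul_assoc]
    rw [hK1]
    calc ∑ i, K i * (A*ρs) * (K i)ᴴ
        = ∑ i, (starRingEnd ℂ ω) • (A * (K i * ρs * (K i)ᴴ)) := by
          refine Finset.sum_congr rfl fun i _ => ?_
          rw [hcm i, Matrix.smul_mul, Matrix.mul_assoc, Matrix.mul_assoc]
      _ = (starRingEnd ℂ ω) • (A * ρs) := by
          rw [← Finset.smul_sum, ← Matrix.mul_sum, hfixρ]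
  · intro hpd At _ hAteig
    have hdet : IsUnit ρs.det := hpd.det_pos.ne'.isUnit
    have hinv : ρs * ρs⁻¹ = 1 := Matrix.mul_nonsing_inv _ hdet
    have hinv' : ρs⁻¹ * ρs = 1 := Matrix.nonsing_inv_mul _ hdet
    set B := At * ρs⁻¹ with hB
    have hBρ : B * ρs = At := by rw [hB, Matrix.mul_assoc, hinv', Matrix.mul_one]
    have hρBH : ρs * Bᴴ = Atᴴ := by
      rw [hB, Matrix.conjTranspose_mul, Matrix.conjTranspose_nonsing_inv, hρs.1.1,
        ← Matrix.mul_assoc, hinv, Matrix.one_mul]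
    have hsumAt : ∑ i, K i * At * (K i)ᴴ = (starRingEnd ℂ ω) • At := by
      rw [← hK1]; exact hAteig
    have hsumAtH : ∑ i, K i * Atᴴ * (K i)ᴴ = ω • Atᴴ := by
      calc ∑ i, K i * Atᴴ * (K i)ᴴ = (∑ i, K i * At * (K i)ᴴ)ᴴ := by
            rw [Matrix.conjTranspose_sum]
            exact Finset.sum_congr rfl fun i _ => by
              rw [Matrix.conjTranspose_mul, Matrix.conjTranspose_mul,
                Matrix.conjTranspose_conjTranspose, Matrix.mul_assoc]
        _ = ω • Atᴴ := by
            rw [hsumAt, Matrix.conjTranspose_smul, RCLike.star_def, Complex.conj_conj]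
    have h2 : ∑ i, (((K i)ᴴ*B*(K i))*(ρs*Bᴴ)).trace = ω * ((Bᴴ*(B*ρs)).trace) := by
      have step : ∀ i : Fin n, (((K i)ᴴ*B*(K i))*(ρs*Bᴴ)).trace
          = (B*(K i*Atᴴ*(K i)ᴴ)).trace := by
        intro i
        rw [hρBH, Matrix.mul_assoc ((K i)ᴴ*B) (K i) Atᴴ,
          Matrix.mul_assoc ((K i)ᴴ) B (K i * Atᴴ), Matrix.trace_mul_comm,
          Matrix.mul_assoc, Matrix.mul_assoc]
      rw [Finset.sum_congr rfl (fun i _ => step i), ← Matrix.trace_sum, ← Matrix.mul_sum,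
        hsumAtH, Matrix.mul_smul, Matrix.trace_smul, smul_eq_mul]
      congr 1
      rw [← hρBH, ← Matrix.mul_assoc, Matrix.trace_mul_cycle, Matrix.mul_assoc]
    have h3 : ∑ i, (((K i)ᴴ*Bᴴ*(K i))*(B*ρs)).trace
        = (starRingEnd ℂ ω) * ((Bᴴ*(B*ρs)).trace) := by
      have step : ∀ i : Fin n, (((K i)ᴴ*Bᴴ*(K i))*(B*ρs)).trace
          = (Bᴴ*(K i*At*(K i)ᴴ)).trace := by
        intro i
        rw [hBρ, Matrix.mul_assoc ((K i)ᴴ*Bᴴ) (K i) At,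
          Matrix.mul_assoc ((K i)ᴴ) Bᴴ (K i * At), Matrix.trace_mul_comm,
          Matrix.mul_assoc, Matrix.mul_assoc]
      rw [Finset.sum_congr rfl (fun i _ => step i), ← Matrix.trace_sum, ← Matrix.mul_sum,
        hsumAt, Matrix.mul_smul, Matrix.trace_smul, smul_eq_mul, hBρ]
    have hZ := comm_lemma K hK2 ρs S B hS hSS hfixρ ω hωc h2 h3
    have hcomm : ∀ i, K i * B = (starRingEnd ℂ ω) • (B * K i) := by
      intro i
      have h1 : (K i * B - (starRingEnd ℂ ω)•(B*K i)) * ρs * ρs⁻¹ = 0 := by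
        rw [hZ i, Matrix.zero_mul]
      rwa [Matrix.mul_assoc, hinv, Matrix.mul_one, sub_eq_zero] at h1
    rw [hΦdf]
    calc ∑ i, (K i)ᴴ * B * K i = ∑ i, ω • ((K i)ᴴ * K i * B) := by
          refine Finset.sum_congr rfl fun i _ => ?_
          have hBK : B * K i = ω • (K i * B) := by
            rw [hcomm i, smul_smul, hωc, one_smul]
          rw [Matrix.mul_assoc, hBK, Matrix.mul_smul, ← Matrix.mul_assoc]
      _ = ω • B := by
          rw [← Finset.smul_sum, ← Finset.sum_mul, hK2, Matrix.one_mul]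
end
end
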